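/- Let 𝒲 ⊂ ℝ² be bounded, with nonempty interior, star-shaped with respect to the origin, and symmetric (−𝒲 = 𝒲). Let 𝒫 = {x ∈ ℤ[√2]² : x̄ ∈ 𝒲} where x̄ = (x̄₁, x̄₂) is componentwise Galois conjugation, embedded in ℝ² via the real embedding. Then a point x = (x₁,x₂) ∈ 𝒫 is visible (no t ∈ (0,1) with tx ∈ 𝒫) if and only if gcd(x₁,x₂) = 1 in ℤ[√2] and λx̄ ∉ 𝒲, where λ = 1 + √2. -/

import Mathlib

open Pointwise

/-- The real embedding of `ℤ[√2]`. -/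
noncomputable def emb (z : Zsqrtd 2) : ℝ := z.re + z.im * Real.sqrt 2

/-- The Galois conjugate embedding `a + b√2 ↦ a - b√2`. -/
noncomputable def embConj (z : Zsqrtd 2) : ℝ := z.re - z.im * Real.sqrt 2

/-- The cut-and-project set with window `W`. -/
noncomputable def cutProject (W : Set (ℝ × ℝ)) : Set (ℝ × ℝ) :=
  {p | ∃ x₁ x₂ : Zsqrtd 2, p = (emb x₁, emb x₂) ∧ (embConj x₁, embConj x₂) ∈ W}

/-! ### Basic API for the embeddings -/

lemma two_nonsquare : ∀ n : ℤ, (2:ℤ) ≠ n * n := by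
  intro n h
  have h1 : n.natAbs * n.natAbs = 2 := by
    have := Int.natAbs_mul_self (a := n); omega
  rcases Nat.lt_or_ge n.natAbs 2 with h2 | h2
  · interval_cases h3 : n.natAbs <;> omega
  · nlinarith

noncomputable def embHom : Zsqrtd 2 →+* ℝ :=
  Zsqrtd.lift ⟨Real.sqrt 2, by rw [Real.mul_self_sqrt (by norm_num)]; norm_num⟩

noncomputable def embConjHom : Zsqrtd 2 →+* ℝ :=
  Zsqrtd.lift ⟨-Real.sqrt 2, by rw [neg_mul_neg, Real.mul_self_sqrt (by norm_num)]; norm_num⟩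

lemma emb_eq (z : Zsqrtd 2) : emb z = embHom z := rfl
lemma embConj_eq (z : Zsqrtd 2) : embConj z = embConjHom z := by
  simp [embConj, embConjHom, emb, sub_eq_add_neg]

lemma emb_injective : Function.Injective emb := by
  have := Zsqrtd.lift_injective (R := ℝ)
    ⟨Real.sqrt 2, by rw [Real.mul_self_sqrt (by norm_num)]; norm_num⟩ two_nonsquare
  intro a b h
  exact this h

lemma embConj_injective : Function.Injective embConj := by
  have := Zsqrtd.lift_injective (R := ℝ)
    ⟨-Real.sqrt 2, by rw [neg_mul_neg, Real.mul_self_sqrt (by norm_num)]; norm_num⟩ two_nonsquare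
  intro a b h
  rw [embConj_eq, embConj_eq] at h
  exact this h

lemma emb_mul (a b : Zsqrtd 2) : emb (a * b) = emb a * emb b := by
  simp [emb_eq, map_mul]
lemma embConj_mul (a b : Zsqrtd 2) : embConj (a * b) = embConj a * embConj b := by
  simp [embConj_eq, map_mul]
lemma emb_zero : emb 0 = 0 := by simp [emb_eq]
lemma emb_one : emb 1 = 1 := by simp [emb_eq]
lemma embConj_one : embConj 1 = 1 := by simp [embConj_eq]
lemma emb_neg (z : Zsqrtd 2) : emb (-z) = -emb z := by simp [emb_eq, map_neg]
lemma embConj_neg (z : Zsqrtd 2) : embConj (-z) = -embConj z := by simp [embConj_eq, map_neg]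
lemma emb_ne_zero {z : Zsqrtd 2} (h : z ≠ 0) : emb z ≠ 0 := by
  intro h0; exact h (emb_injective (by rw [h0, emb_zero]))
lemma embConj_ne_zero {z : Zsqrtd 2} (h : z ≠ 0) : embConj z ≠ 0 := by
  intro h0
  apply h; apply embConj_injective
  rw [h0]; simp [embConj]

lemma norm_real (z : Zsqrtd 2) : (z.norm : ℝ) = emb z * embConj z := by
  have h2 : Real.sqrt 2 * Real.sqrt 2 = 2 := Real.mul_self_sqrt (by norm_num)
  simp only [Zsqrtd.norm, emb, embConj]
  push_cast
  linear_combination ((z.im:ℝ)*(z.im:ℝ)) * h2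

/-! ### Euclidean algorithm in ℤ[√2] -/

lemma div_rem (a b : Zsqrtd 2) (hb : b ≠ 0) :
    ∃ q r : Zsqrtd 2, a = q * b + r ∧ r.norm.natAbs < b.norm.natAbs := by
  set n : ℤ := b.norm with hn
  have hn0 : n ≠ 0 := fun h => hb ((Zsqrtd.norm_eq_zero two_nonsquare b).mp h)
  set c : Zsqrtd 2 := a * star b with hc
  set q : Zsqrtd 2 := ⟨round ((c.re : ℚ) / n), round ((c.im : ℚ) / n)⟩ with hq
  refine ⟨q, a - q * b, by ring, ?_⟩
  set r : Zsqrtd 2 := a - q * b with hr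
  have key : r * star b = c - q * (n : Zsqrtd 2) := by
    have : ((n : ℤ) : Zsqrtd 2) = b * star b := Zsqrtd.norm_eq_mul_conj b
    rw [hr, hc, sub_mul, mul_assoc, ← this]
  set e : ℤ := c.re - q.re * n with he
  set f : ℤ := c.im - q.im * n with hf
  have hre : (r * star b).re = e ∧ (r * star b).im = f := by
    rw [key]
    constructor <;> simp [Zsqrtd.re_mul, Zsqrtd.im_mul, he, hf]
  have hbound : ∀ (x : ℤ) (y : ℤ), y = x - round ((x:ℚ)/n) * n → 2 * |y| ≤ |n| := by
    intro x y hy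
    have h1 : |(x:ℚ)/n - round ((x:ℚ)/n)| ≤ 1/2 := abs_sub_round _
    have hnq : ((n:ℚ)) ≠ 0 := by exact_mod_cast hn0
    have h2 : |(y:ℚ)| ≤ |(n:ℚ)| / 2 := by
      have : (y:ℚ) = ((x:ℚ)/n - round ((x:ℚ)/n)) * n := by
        rw [hy]; push_cast; field_simp
      rw [this, abs_mul]
      calc |(x:ℚ)/n - round ((x:ℚ)/n)| * |(n:ℚ)| ≤ (1/2) * |(n:ℚ)| := by
            apply mul_le_mul_of_nonneg_right h1 (abs_nonneg _)
        _ = |(n:ℚ)| / 2 := by ring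
    have h3 : (2:ℚ) * |(y:ℚ)| ≤ |(n:ℚ)| := by linarith
    have h4 : ((2 * |y| : ℤ) : ℚ) ≤ ((|n| : ℤ) : ℚ) := by push_cast; exact h3
    exact_mod_cast h4
  have hE : 2 * |e| ≤ |n| := hbound c.re e (by rw [he])
  have hF : 2 * |f| ≤ |n| := hbound c.im f (by rw [hf])
  have hnorm : r.norm * n = e * e - 2 * (f * f) := by
    have h1 : (r * star b).norm = r.norm * n := by
      rw [Zsqrtd.norm_mul, Zsqrtd.norm_conj]
    rw [← h1, Zsqrtd.norm]
    rw [hre.1, hre.2]; ring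
  have habs : 2 * |r.norm * n| ≤ n * n := by
    rw [hnorm]
    have h4e : 4 * (e*e) ≤ n*n := by nlinarith [abs_nonneg e, abs_nonneg n, sq_abs e, sq_abs n]
    have h4f : 4 * (f*f) ≤ n*n := by nlinarith [abs_nonneg f, abs_nonneg n, sq_abs f, sq_abs n]
    rcases abs_cases (e*e - 2*(f*f)) with ⟨h,_⟩ | ⟨h,_⟩ <;> nlinarith
  have h5 : 2 * |r.norm| * |n| ≤ |n| * |n| := by
    rw [mul_assoc, ← abs_mul]
    calc 2 * |r.norm * n| ≤ n * n := habs
      _ = |n| * |n| := (abs_mul_abs_self n).symm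
  have h6 : 2 * |r.norm| ≤ |n| := by
    have hnpos : 0 < |n| := abs_pos.mpr hn0
    exact le_of_mul_le_mul_right h5 hnpos
  have h7 : |r.norm| = (r.norm.natAbs : ℤ) := Int.abs_eq_natAbs _
  have h8 : |n| = (n.natAbs : ℤ) := Int.abs_eq_natAbs _
  rw [h7, h8] at h6
  have h9 : n.natAbs ≠ 0 := Int.natAbs_ne_zero.mpr hn0
  omega

lemma bezout : ∀ (k : ℕ) (a b : Zsqrtd 2), b.norm.natAbs ≤ k →
    ∃ d p q : Zsqrtd 2, p * a + q * b = d ∧ d ∣ a ∧ d ∣ b := by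
  intro k
  induction k with
  | zero =>
    intro a b hb
    have hb0 : b = 0 := by
      have : b.norm = 0 := by omega
      exact (Zsqrtd.norm_eq_zero two_nonsquare b).mp this
    exact ⟨a, 1, 0, by rw [hb0]; ring, dvd_refl a, by rw [hb0]; exact dvd_zero a⟩
  | succ k ih =>
    intro a b hb
    by_cases hb0 : b = 0
    · exact ⟨a, 1, 0, by rw [hb0]; ring, dvd_refl a, by rw [hb0]; exact dvd_zero a⟩
    · obtain ⟨q, r, hqr, hlt⟩ := div_rem a b hb0
      obtain ⟨d, p', q', hpq, hdb, hdr⟩ := ih b r (by omega)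
      refine ⟨d, q', p' - q' * q, by linear_combination hpq + q' * hqr, ?_, hdb⟩
      rw [hqr]; exact dvd_add (hdb.mul_left q) hdr

lemma coprime_or (a b : Zsqrtd 2) :
    IsCoprime a b ∨ ∃ d : Zsqrtd 2, ¬IsUnit d ∧ d ∣ a ∧ d ∣ b ∧ (d = 0 → a = 0 ∧ b = 0) := by
  obtain ⟨d, p, q, h, da, db⟩ := bezout b.norm.natAbs a b le_rfl
  by_cases hu : IsUnit d
  · left
    obtain ⟨v, hv⟩ := hu.exists_left_inv
    exact ⟨v * p, v * q, by linear_combination v * h + hv⟩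
  · right
    refine ⟨d, hu, da, db, fun h0 => ?_⟩
    rw [h0] at da db
    exact ⟨zero_dvd_iff.mp da, zero_dvd_iff.mp db⟩

/-! ### Units of ℤ[√2] -/

def lambdaU : (Zsqrtd 2)ˣ :=
  ⟨⟨1,1⟩, ⟨-1,1⟩, by ext <;> simp [Zsqrtd.re_mul, Zsqrtd.im_mul],
    by ext <;> simp [Zsqrtd.re_mul, Zsqrtd.im_mul]⟩

lemma emb_lambdaU_zpow (n : ℤ) :
    emb ((lambdaU ^ n : (Zsqrtd 2)ˣ) : Zsqrtd 2) = (1 + Real.sqrt 2) ^ n := by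
  have h1 : embHom ((lambdaU ^ n : (Zsqrtd 2)ˣ) : Zsqrtd 2)
      = ((Units.map (embHom.toMonoidHom) (lambdaU ^ n) : ℝˣ) : ℝ) := rfl
  rw [emb_eq, h1, map_zpow, Units.val_zpow_eq_zpow_val]
  have h2 : ((Units.map (embHom.toMonoidHom) lambdaU : ℝˣ) : ℝ) = 1 + Real.sqrt 2 := by
    show embHom (⟨1,1⟩ : Zsqrtd 2) = _
    simp [embHom, Zsqrtd.lift]
  rw [h2]

lemma embConj_lambdaU_zpow (n : ℤ) :
    embConj ((lambdaU ^ n : (Zsqrtd 2)ˣ) : Zsqrtd 2) = (1 - Real.sqrt 2) ^ n := by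
  have h1 : embConjHom ((lambdaU ^ n : (Zsqrtd 2)ˣ) : Zsqrtd 2)
      = ((Units.map (embConjHom.toMonoidHom) (lambdaU ^ n) : ℝˣ) : ℝ) := rfl
  rw [embConj_eq, h1, map_zpow, Units.val_zpow_eq_zpow_val]
  have h2 : ((Units.map (embConjHom.toMonoidHom) lambdaU : ℝˣ) : ℝ) = 1 - Real.sqrt 2 := by
    show embConjHom (⟨1,1⟩ : Zsqrtd 2) = _
    simp [embConjHom, Zsqrtd.lift]; ring
  rw [h2]

lemma abs_zpow' (a : ℝ) (n : ℤ) : |a ^ n| = |a| ^ n := by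
  rcases n with m | m
  · simpa using abs_pow a m
  · simp [zpow_negSucc, abs_inv, abs_pow]

lemma sqrt2_gt_one : 1 < Real.sqrt 2 := by
  have := Real.sq_sqrt (by norm_num : (0:ℝ) ≤ 2)
  nlinarith [Real.sqrt_nonneg 2]

lemma sqrt2_lt : Real.sqrt 2 < 1.5 := by
  have := Real.sq_sqrt (by norm_num : (0:ℝ) ≤ 2)
  nlinarith [Real.sqrt_nonneg 2]

lemma abs_one_sub_sqrt2 : |1 - Real.sqrt 2| = (1 + Real.sqrt 2)⁻¹ := by
  have h1 := sqrt2_gt_one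
  have h2 := Real.sq_sqrt (by norm_num : (0:ℝ) ≤ 2)
  rw [abs_of_nonpos (by linarith)]
  have h3 : (-(1 - Real.sqrt 2)) * (1 + Real.sqrt 2) = 1 := by nlinarith
  field_simp
  nlinarith

/-! ### The key inequality for conjugates -/

lemma conj_large {q : Zsqrtd 2} (h0 : 0 < emb q) (h1 : emb q < 1) :
    1 + Real.sqrt 2 ≤ |embConj q| := by
  by_contra hcon
  push_neg at hcon
  have hs1 := sqrt2_gt_one
  have hs0 := Real.sqrt_nonneg 2
  have hs2 := sqrt2_lt
  have habs := abs_lt.mp hcon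
  set a : ℤ := q.re
  set b : ℤ := q.im
  have hemb : emb q = (a:ℝ) + (b:ℝ) * Real.sqrt 2 := rfl
  have hconj : embConj q = (a:ℝ) - (b:ℝ) * Real.sqrt 2 := rfl
  rw [hemb] at h0 h1
  rw [hconj] at habs
  have hble : ∀ m : ℤ, b ≤ m → (b:ℝ) * Real.sqrt 2 ≤ (m:ℝ) * Real.sqrt 2 := by
    intro m hm
    apply mul_le_mul_of_nonneg_right _ hs0
    exact_mod_cast hm
  have hble' : ∀ m : ℤ, m ≤ b → (m:ℝ) * Real.sqrt 2 ≤ (b:ℝ) * Real.sqrt 2 := by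
    intro m hm
    apply mul_le_mul_of_nonneg_right _ hs0
    exact_mod_cast hm
  have ha1 : (-1:ℤ) ≤ a := by
    by_contra h
    push_neg at h
    have h2 : a ≤ -2 := by omega
    have : (a:ℝ) ≤ -2 := by exact_mod_cast h2
    nlinarith [habs.1, h0]
  have ha2 : a ≤ 1 := by
    by_contra h
    push_neg at h
    have : (2:ℝ) ≤ (a:ℝ) := by exact_mod_cast h
    nlinarith [habs.2, h1]
  interval_cases a <;> push_cast at h0 h1 habs
  · -- a = -1
    have hb1 : (1:ℤ) ≤ b := by
      by_contra h
      push_neg at h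
      have := hble 0 (by omega)
      push_cast at this
      linarith
    have hb2 : b ≤ 1 := by
      by_contra h
      push_neg at h
      have := hble' 2 (by omega)
      push_cast at this
      linarith
    have hb : b = 1 := le_antisymm hb2 hb1
    rw [hb] at habs
    push_cast at habs
    linarith [habs.1]
  · -- a = 0
    have hb1 : (1:ℤ) ≤ b := by
      by_contra h
      push_neg at h
      have := hble 0 (by omega)
      push_cast at this
      linarith
    have := hble' 1 hb1
    push_cast at this
    linarith
  · -- a = 1
    have hb1 : b ≤ -1 := by
      by_contra h
      push_neg at h
      have := hble' 0 (by omega)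
      push_cast at this
      linarith
    have := hble (-1) hb1
    push_cast at this
    linarith

/-! ### Finding a good rescaling for a non-unit divisor -/

lemma exists_scaler (d : Zsqrtd 2) (hd0 : d ≠ 0) (hdu : ¬ IsUnit d) :
    ∃ d' u : Zsqrtd 2, d' ∣ d ∧ d' ≠ 0 ∧ IsUnit u ∧
      0 < emb u / emb d' ∧ emb u / emb d' < 1 ∧ |embConj u| ≤ |embConj d'| := by
  have hnz : d.norm ≠ 0 := fun h => hd0 ((Zsqrtd.norm_eq_zero two_nonsquare d).mp h)
  have hn1 : d.norm.natAbs ≠ 1 := fun h => hdu (Zsqrtd.norm_eq_one_iff.mp h)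
  have hN2 : 2 ≤ d.norm.natAbs := by
    have := Int.natAbs_ne_zero.mpr hnz; omega
  have hs1 := sqrt2_gt_one
  have hs2 := sqrt2_lt
  have hs0 := Real.sqrt_nonneg 2
  by_cases hN : d.norm.natAbs = 2
  · -- case |N d| = 2 : then √2 ∣ d; take d' = √2, u = 1
    have hnormval : d.norm = d.re * d.re - 2 * d.im * d.im := rfl
    have h2dvd : (2:ℤ) ∣ d.re * d.re := by
      rcases (by omega : d.norm = 2 ∨ d.norm = -2) with h | h <;>
        [exact ⟨d.im * d.im + 1, by linarith⟩; exact ⟨d.im * d.im - 1, by linarith⟩]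
    have h2re : (2:ℤ) ∣ d.re := by
      rcases Int.Prime.dvd_mul' Nat.prime_two (by exact_mod_cast h2dvd) with h | h <;>
        exact_mod_cast h
    obtain ⟨k, hk⟩ := h2re
    have hdvd : Zsqrtd.sqrtd * (⟨d.im, k⟩ : Zsqrtd 2) = d := by
      ext <;> simp [Zsqrtd.re_mul, Zsqrtd.im_mul, Zsqrtd.sqrtd] <;> omega
    have hsq0 : (Zsqrtd.sqrtd : Zsqrtd 2) ≠ 0 := by
      intro h
      have := congrArg Zsqrtd.im h
      simp [Zsqrtd.sqrtd] at this
    refine ⟨Zsqrtd.sqrtd, 1, ⟨⟨d.im, k⟩, hdvd.symm⟩, hsq0, isUnit_one, ?_, ?_, ?_⟩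
    · rw [emb_one]
      have : emb (Zsqrtd.sqrtd : Zsqrtd 2) = Real.sqrt 2 := by simp [emb, Zsqrtd.sqrtd]
      rw [this]
      positivity
    · rw [emb_one]
      have : emb (Zsqrtd.sqrtd : Zsqrtd 2) = Real.sqrt 2 := by simp [emb, Zsqrtd.sqrtd]
      rw [this, div_lt_one (by positivity)]
      linarith
    · rw [embConj_one]
      have : embConj (Zsqrtd.sqrtd : Zsqrtd 2) = -Real.sqrt 2 := by simp [embConj, Zsqrtd.sqrtd]
      rw [this, abs_neg, abs_one, abs_of_nonneg hs0]
      linarith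
  · -- case |N d| ≥ 3
    have hN3 : 3 ≤ d.norm.natAbs := by omega
    set lam : ℝ := 1 + Real.sqrt 2 with hlamdef
    have hlam0 : (0:ℝ) < lam := by rw [hlamdef]; linarith
    have hlam1 : (1:ℝ) < lam := by rw [hlamdef]; linarith
    have hlamne : lam ≠ 1 := by linarith
    have hlam3 : lam < 3 := by rw [hlamdef]; linarith
    set e : ℝ := |emb d| with hedef
    set c : ℝ := |embConj d| with hcdef
    have he0 : 0 < e := abs_pos.mpr (emb_ne_zero hd0)
    have hc0 : 0 < c := abs_pos.mpr (embConj_ne_zero hd0)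
    have hec : e * c = (d.norm.natAbs : ℝ) := by
      rw [hedef, hcdef, ← abs_mul, ← norm_real, Nat.cast_natAbs]
      simp
    have hec3 : (3:ℝ) ≤ e * c := by
      rw [hec]; exact_mod_cast hN3
    set n : ℤ := ⌈Real.logb lam (1/c)⌉ with hndef
    have h1 : 1/c ≤ lam ^ n := by
      calc 1/c = lam ^ Real.logb lam (1/c) :=
            (Real.rpow_logb hlam0 hlamne (by positivity)).symm
        _ ≤ lam ^ ((n:ℤ):ℝ) :=
            Real.rpow_le_rpow_of_exponent_le hlam1.le (Int.le_ceil _)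
        _ = lam ^ n := Real.rpow_intCast lam n
    have h2 : lam ^ n ≤ lam / c := by
      calc lam ^ n = lam ^ ((n:ℤ):ℝ) := (Real.rpow_intCast lam n).symm
        _ ≤ lam ^ (Real.logb lam (1/c) + 1) := by
            apply Real.rpow_le_rpow_of_exponent_le hlam1.le
            have := Int.ceil_lt_add_one (Real.logb lam (1/c))
            rw [← hndef] at this
            linarith
        _ = (1/c) * lam := by
            rw [Real.rpow_add hlam0, Real.rpow_logb hlam0 hlamne (by positivity),
              Real.rpow_one]
        _ = lam / c := by ring
    have h3 : lam / c < e := by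
      rw [div_lt_iff₀ hc0]
      calc lam < 3 := hlam3
        _ ≤ e * c := hec3
    have hzpos : 0 < lam ^ n := zpow_pos hlam0 n
    have hlamn_lt : lam ^ n < e := lt_of_le_of_lt h2 h3
    have hconj_abs : |embConj ((lambdaU ^ n : (Zsqrtd 2)ˣ) : Zsqrtd 2)| = (lam ^ n)⁻¹ := by
      rw [embConj_lambdaU_zpow, abs_zpow', abs_one_sub_sqrt2, inv_zpow, hlamdef]
    have hconj_le : (lam ^ n)⁻¹ ≤ c := by
      rw [inv_le_comm₀ hzpos hc0]
      rw [one_div] at h1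
      exact h1
    rcases (emb_ne_zero hd0).lt_or_gt with hneg | hpos
    · -- emb d < 0
      have hee : e = -emb d := abs_of_neg hneg
      refine ⟨d, -((lambdaU ^ n : (Zsqrtd 2)ˣ) : Zsqrtd 2), dvd_refl d, hd0,
        ((lambdaU ^ n).isUnit).neg, ?_, ?_, ?_⟩
      · rw [emb_neg, emb_lambdaU_zpow, ← hlamdef]
        have hthis : -lam ^ n / emb d = lam ^ n / e := by
          rw [hee, div_neg, neg_div]
        rw [hthis]
        exact div_pos hzpos he0
      · rw [emb_neg, emb_lambdaU_zpow, ← hlamdef]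
        have hthis : -lam ^ n / emb d = lam ^ n / e := by
          rw [hee, div_neg, neg_div]
        rw [hthis, div_lt_one he0]
        exact hlamn_lt
      · rw [embConj_neg, abs_neg, hconj_abs]
        exact hconj_le
    · -- emb d > 0
      have hee : e = emb d := abs_of_pos hpos
      refine ⟨d, ((lambdaU ^ n : (Zsqrtd 2)ˣ) : Zsqrtd 2), dvd_refl d, hd0,
        (lambdaU ^ n).isUnit, ?_, ?_, ?_⟩
      · rw [emb_lambdaU_zpow, ← hlamdef, ← hee]
        exact div_pos hzpos he0
      · rw [emb_lambdaU_zpow, ← hlamdef, ← hee, div_lt_one he0]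
        exact hlamn_lt
      · rw [hconj_abs]
        exact hconj_le

/-! ### Window lemmas -/

lemma scale_mem {W : Set (ℝ × ℝ)}
    (hWstar : ∀ w ∈ W, ∀ t : ℝ, 0 ≤ t → t ≤ 1 → t • w ∈ W)
    (hWsymm : -W = W) {w : ℝ × ℝ} (hw : w ∈ W) {s : ℝ} (hs : |s| ≤ 1) : s • w ∈ W := by
  rcases le_or_gt 0 s with h | h
  · exact hWstar w hw s h (le_trans (le_abs_self s) hs)
  · have h1 : (-s) • w ∈ W := by
      apply hWstar w hw (-s) (by linarith)
      calc -s ≤ |s| := neg_le_abs s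
        _ ≤ 1 := hs
    have h2 : s • w = -((-s) • w) := by
      rw [neg_smul, neg_neg]
    rw [h2, ← hWsymm]
    exact Set.neg_mem_neg.mpr h1

/-! ### Rationality of the scaling factor -/

lemma exists_q {x₁ x₂ y₁ y₂ : Zsqrtd 2} {t : ℝ} (hc : IsCoprime x₁ x₂)
    (h1 : t * emb x₁ = emb y₁) (h2 : t * emb x₂ = emb y₂) (hx1 : x₁ ≠ 0) :
    ∃ q : Zsqrtd 2, y₁ = q * x₁ ∧ y₂ = q * x₂ ∧ emb q = t := by
  have hx1' : emb x₁ ≠ 0 := emb_ne_zero hx1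
  have hcross : y₁ * x₂ = y₂ * x₁ := by
    apply emb_injective
    rw [emb_mul, emb_mul, ← h1, ← h2]
    ring
  have hdvd : x₁ ∣ y₁ := by
    apply hc.dvd_of_dvd_mul_right
    exact ⟨y₂, by linear_combination hcross⟩
  obtain ⟨q, hq⟩ := hdvd
  refine ⟨q, by rw [hq]; ring, ?_, ?_⟩
  · have hxy : x₁ * y₂ = x₁ * (q * x₂) := by linear_combination x₂ * hq - hcross
    have hthis := congrArg emb hxy
    rw [emb_mul, emb_mul, emb_mul] at hthis
    apply emb_injective
    rw [emb_mul]
    exact mul_left_cancel₀ hx1' hthis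
  · have h4 : emb y₁ = emb q * emb x₁ := by
      rw [hq, emb_mul]; ring
    have : t * emb x₁ = emb q * emb x₁ := by rw [h1, h4]
    exact (mul_right_cancel₀ hx1' this.symm)

/-! ### Main theorem -/

theorem visibility_condition_cut_project (W : Set (ℝ × ℝ))
    (hWb : Bornology.IsBounded W) (hWint : (interior W).Nonempty)
    (hWstar : ∀ w ∈ W, ∀ t : ℝ, 0 ≤ t → t ≤ 1 → t • w ∈ W)
    (hWsymm : -W = W)
    (x₁ x₂ : Zsqrtd 2) (hx : (embConj x₁, embConj x₂) ∈ W) :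
    (∀ t : ℝ, 0 < t → t < 1 → t • ((emb x₁, emb x₂) : ℝ × ℝ) ∉ cutProject W) ↔
      IsCoprime x₁ x₂ ∧
        ((1 + Real.sqrt 2) • ((embConj x₁, embConj x₂) : ℝ × ℝ)) ∉ W := by
  have hs1 := sqrt2_gt_one
  have hs2 := sqrt2_lt
  constructor
  · intro V
    constructor
    · -- coprimality
      by_contra hnc
      rcases coprime_or x₁ x₂ with hcop | ⟨d, hdu, hd1, hd2, hd0⟩
      · exact hnc hcop
      · by_cases hzz : x₁ = 0 ∧ x₂ = 0
        · apply V (1/2) (by norm_num) (by norm_num)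
          refine ⟨0, 0, ?_, ?_⟩
          · rw [hzz.1, hzz.2, emb_zero]
            simp [Prod.smul_mk]
          · rw [hzz.1, hzz.2] at hx
            exact hx
        · have hdne : d ≠ 0 := fun h => hzz (hd0 h)
          obtain ⟨d', u, hd'd, hd'0, hu, ht0, ht1, hconjle⟩ := exists_scaler d hdne hdu
          obtain ⟨y₁, hy₁⟩ := dvd_trans hd'd hd1
          obtain ⟨y₂, hy₂⟩ := dvd_trans hd'd hd2
          set t : ℝ := emb u / emb d' with htdef
          apply V t ht0 ht1
          have hd'ne : emb d' ≠ 0 := emb_ne_zero hd'0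
          have hd'cne : embConj d' ≠ 0 := embConj_ne_zero hd'0
          refine ⟨u * y₁, u * y₂, ?_, ?_⟩
          · have e1 : t * emb x₁ = emb (u * y₁) := by
              rw [hy₁, emb_mul, emb_mul, htdef]
              field_simp
            have e2 : t * emb x₂ = emb (u * y₂) := by
              rw [hy₂, emb_mul, emb_mul, htdef]
              field_simp
            rw [Prod.smul_mk, smul_eq_mul, smul_eq_mul, e1, e2]
          · set s : ℝ := embConj u / embConj d' with hsdef
            have e1 : embConj (u * y₁) = s * embConj x₁ := by
              rw [hy₁, embConj_mul, embConj_mul, hsdef]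
              field_simp
            have e2 : embConj (u * y₂) = s * embConj x₂ := by
              rw [hy₂, embConj_mul, embConj_mul, hsdef]
              field_simp
            have hsle : |s| ≤ 1 := by
              rw [hsdef, abs_div, div_le_one (abs_pos.mpr hd'cne)]
              exact hconjle
            have := scale_mem hWstar hWsymm hx hsle
            have hpair : (embConj (u * y₁), embConj (u * y₂))
                = s • ((embConj x₁, embConj x₂) : ℝ × ℝ) := by
              rw [Prod.smul_mk, smul_eq_mul, smul_eq_mul, e1, e2]
            rw [hpair]
            exact this
    · -- λ • x̄ ∉ W
      intro hlamW
      apply V (Real.sqrt 2 - 1) (by linarith) (by linarith)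
      set mu : Zsqrtd 2 := ⟨-1, 1⟩ with hmu
      have hembmu : emb mu = Real.sqrt 2 - 1 := by
        simp [emb, hmu]; ring
      have hconjmu : embConj mu = -(1 + Real.sqrt 2) := by
        simp [embConj, hmu]; ring
      refine ⟨mu * x₁, mu * x₂, ?_, ?_⟩
      · rw [Prod.smul_mk, smul_eq_mul, smul_eq_mul, emb_mul, emb_mul, hembmu]
      · have hpair : (embConj (mu * x₁), embConj (mu * x₂))
            = -((1 + Real.sqrt 2) • ((embConj x₁, embConj x₂) : ℝ × ℝ)) := by
          rw [embConj_mul, embConj_mul, hconjmu, Prod.smul_mk, Prod.neg_mk,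
            smul_eq_mul, smul_eq_mul]
          simp only [Prod.mk.injEq]
          constructor <;> ring
        rw [hpair, ← hWsymm]
        exact Set.neg_mem_neg.mpr hlamW
  · rintro ⟨hc, hlam⟩ t ht0 ht1 hmem
    obtain ⟨y₁, y₂, hpair, hyW⟩ := hmem
    rw [Prod.smul_mk, smul_eq_mul, smul_eq_mul, Prod.mk.injEq] at hpair
    obtain ⟨h1, h2⟩ := hpair
    have hq : ∃ q : Zsqrtd 2, y₁ = q * x₁ ∧ y₂ = q * x₂ ∧ emb q = t := by
      by_cases hx1 : x₁ = 0
      · have hx2 : x₂ ≠ 0 := by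
          intro hx2
          rw [hx1, hx2] at hc
          exact not_isCoprime_zero_zero hc
        obtain ⟨q, hq2, hq1, hqt⟩ := exists_q hc.symm h2 h1 hx2
        exact ⟨q, hq1, hq2, hqt⟩
      · exact exists_q hc h1 h2 hx1
    obtain ⟨q, hq1, hq2, hqt⟩ := hq
    have hq0 : 0 < emb q := by rw [hqt]; exact ht0
    have hq1' : emb q < 1 := by rw [hqt]; exact ht1
    have hlarge := conj_large hq0 hq1'
    set cq : ℝ := embConj q with hcq
    have hcq0 : cq ≠ 0 := by
      intro h
      rw [h] at hlarge
      simp at hlarge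
      linarith
    have hyWpair : (embConj y₁, embConj y₂) = cq • ((embConj x₁, embConj x₂) : ℝ × ℝ) := by
      rw [hq1, hq2, embConj_mul, embConj_mul, Prod.smul_mk, smul_eq_mul, smul_eq_mul, hcq]
    rw [hyWpair] at hyW
    apply hlam
    have hsle : |(1 + Real.sqrt 2) / cq| ≤ 1 := by
      rw [abs_div, div_le_one (abs_pos.mpr hcq0)]
      calc |1 + Real.sqrt 2| = 1 + Real.sqrt 2 := abs_of_pos (by linarith)
        _ ≤ |cq| := hlarge
    have := scale_mem hWstar hWsymm hyW hsle
    have heq : ((1 + Real.sqrt 2) / cq) • (cq • ((embConj x₁, embConj x₂) : ℝ × ℝ))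
        = (1 + Real.sqrt 2) • ((embConj x₁, embConj x₂) : ℝ × ℝ) := by
      rw [smul_smul]
      congr 1
      field_simp
    rw [heq] at this
    exact this
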